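/- Let x ∈ ℝ^{S_m} be any vector satisfying Q x = 0 (x a column vector indexed by S_m) and x_{(1,0)} + x_{(1,1)} = 1. Then for every integer n with 1 ≤ n ≤ m, the sum over r from 0 to n of x_{(n,r)} equals 1. (The entries x_{(n,r)} thus form, for each fixed n, a normalized distribution over the possible red-allele counts r, consistent with their interpretation as the stationary probabilities Pr[R = r | N = n] of the allele count among n sampled lineages.) -/

import Mathlib

open Finset

/-- The state space `S_m = {(n,r) : 1 ≤ n ≤ m, 0 ≤ r ≤ n}`, realised as a subtype of
`Fin (m+1) × Fin (m+1)` (first coordinate `n`, second coordinate `r`). -/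
abbrev SmIdx (m : ℕ) := {p : Fin (m + 1) × Fin (m + 1) // 1 ≤ (p.1 : ℕ) ∧ (p.2 : ℕ) ≤ (p.1 : ℕ)}

/-- The entry of the matrix `Q` in row `(n,r)` and column `(n',r')`:
`Q_{(n,r),(n,r-1)} = (n-r+1)v`, `Q_{(n,r),(n,r+1)} = (r+1)u`,
`Q_{(n,r),(n-1,r)} = (n-1-r)n/θ`, `Q_{(n,r),(n-1,r-1)} = (r-1)n/θ`,
`Q_{(n,r),(n,r)} = -n(n-1)/θ - (n-r)v - ru`, and all other entries zero. -/
noncomputable def QEnt (θ u v : ℝ) (n r n' r' : ℕ) : ℝ :=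
  if n' = n ∧ r' + 1 = r then ((n : ℝ) - (r : ℝ) + 1) * v
  else if n' = n ∧ r' = r + 1 then ((r : ℝ) + 1) * u
  else if n' + 1 = n ∧ r' = r then ((n : ℝ) - 1 - (r : ℝ)) * (n : ℝ) / θ
  else if n' + 1 = n ∧ r' + 1 = r then ((r : ℝ) - 1) * (n : ℝ) / θ
  else if n' = n ∧ r' = r then
    -((n : ℝ) * ((n : ℝ) - 1) / θ) - ((n : ℝ) - (r : ℝ)) * v - (r : ℝ) * u
  else 0

/-- The matrix `Q`, rows and columns indexed by `S_m`. -/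
noncomputable def coalQ (m : ℕ) (θ u v : ℝ) : Matrix (SmIdx m) (SmIdx m) ℝ :=
  fun p q => QEnt θ u v (p.1.1 : ℕ) (p.1.2 : ℕ) (q.1.1 : ℕ) (q.1.2 : ℕ)

/-- The state `(1,0) ∈ S_m`. -/
def st10 (m : ℕ) (hm : 1 ≤ m) : SmIdx m :=
  ⟨(⟨1, Nat.lt_succ_of_le hm⟩, ⟨0, Nat.succ_pos m⟩), le_refl 1, Nat.zero_le 1⟩

/-- The state `(1,1) ∈ S_m`. -/
def st11 (m : ℕ) (hm : 1 ≤ m) : SmIdx m :=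
  ⟨(⟨1, Nat.lt_succ_of_le hm⟩, ⟨1, Nat.lt_succ_of_le hm⟩), le_refl 1, le_refl 1⟩

lemma sum_ite_succ (N b : ℕ) (c : ℝ) (hb : b ≤ N) :
    ∑ r ∈ Finset.range N, (if r + 1 = b then c else 0) = if b = 0 then 0 else c := by
  cases b with
  | zero => simp
  | succ t =>
    rw [Finset.sum_congr rfl (fun r _ => by
      simp only [Nat.succ_eq_add_one, Nat.add_right_cancel_iff] : ∀ r ∈ Finset.range N,
        (if r + 1 = t + 1 then c else 0) = if r = t then c else 0)]
    rw [Finset.sum_ite_eq' (Finset.range N) t]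
    rw [if_pos (by simp [Finset.mem_range]; omega)]
    simp

lemma colsum (θ u v : ℝ) (n n' r' : ℕ) (hn : 2 ≤ n) (hr' : r' ≤ n') :
    ∑ r ∈ Finset.range (n+1), QEnt θ u v n r n' r' =
      if n' = n then -((n:ℝ)*((n:ℝ)-1)/θ)
      else if n' + 1 = n then (n:ℝ)*((n:ℝ)-1)/θ
      else 0 := by
  by_cases h1 : n' = n
  · subst h1
    rw [if_pos rfl]
    have hpt : ∀ r, QEnt θ u v n' r n' r' =
        (if r = r' + 1 then ((n':ℝ)-(r':ℝ))*v else 0) +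
        ((if r + 1 = r' then (r':ℝ)*u else 0) +
        (if r = r' then (-((n':ℝ)*((n':ℝ)-1)/θ) - ((n':ℝ)-(r':ℝ))*v - (r':ℝ)*u) else 0)) := by
      intro r
      unfold QEnt
      split_ifs <;> first
        | omega
        | (subst_vars; push_cast; ring)
        | (push_cast [show (r:ℝ) = (r':ℝ) + 1 by exact_mod_cast by omega]; ring)
        | (push_cast [show (r':ℝ) = (r:ℝ) + 1 by exact_mod_cast by omega]; ring)
    rw [Finset.sum_congr rfl fun r _ => hpt r]
    rw [Finset.sum_add_distrib, Finset.sum_add_distrib]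
    rw [Finset.sum_ite_eq' (Finset.range (n'+1)) (r'+1),
        sum_ite_succ (n'+1) r' _ (by omega),
        Finset.sum_ite_eq' (Finset.range (n'+1)) r']
    simp only [Finset.mem_range]
    rw [if_pos (show r' < n' + 1 by omega)]
    rcases eq_or_lt_of_le hr' with h | h
    · subst h
      rw [if_neg (show ¬ r' + 1 < r' + 1 by omega), if_neg (show ¬ r' = 0 by omega)]
      ring
    · rw [if_pos (show r' + 1 < n' + 1 by omega)]
      by_cases h0 : r' = 0
      · subst h0; rw [if_pos rfl]; push_cast; ring
      · rw [if_neg h0]; ring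
  · by_cases h2 : n' + 1 = n
    · have hpt : ∀ r, QEnt θ u v n r n' r' =
          (if r = r' then ((n:ℝ)-1-(r':ℝ))*(n:ℝ)/θ else 0) +
          (if r = r' + 1 then (r':ℝ)*(n:ℝ)/θ else 0) := by
        intro r
        unfold QEnt
        split_ifs <;> first
          | omega
          | (subst_vars; push_cast; ring)
      rw [Finset.sum_congr rfl fun r _ => hpt r]
      rw [Finset.sum_add_distrib,
          Finset.sum_ite_eq' (Finset.range (n+1)) r',
          Finset.sum_ite_eq' (Finset.range (n+1)) (r'+1)]
      rw [if_pos (by simp [Finset.mem_range]; omega),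
          if_pos (by simp [Finset.mem_range]; omega),
          if_neg h1, if_pos h2]
      ring
    · have hpt : ∀ r, QEnt θ u v n r n' r' = 0 := by
        intro r
        unfold QEnt
        split_ifs <;> first | omega | rfl
      rw [Finset.sum_congr rfl fun r _ => hpt r]
      simp [h1, h2]

lemma level_sum {m : ℕ} (n : ℕ) (h1 : 1 ≤ n) (h2 : n ≤ m) (f : SmIdx m → ℝ) (g : ℕ → ℝ)
    (hfg : ∀ p : SmIdx m, (p.1.1 : ℕ) = n → f p = g (p.1.2 : ℕ)) :
    ∑ p ∈ Finset.univ.filter (fun p : SmIdx m => (p.1.1 : ℕ) = n), f p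
      = ∑ r ∈ Finset.range (n + 1), g r := by
  apply Finset.sum_nbij' (i := fun p : SmIdx m => (p.1.2 : ℕ))
    (j := fun r : ℕ => (⟨(⟨n, by omega⟩, ⟨min r n, by omega⟩),
      by constructor <;> simp <;> omega⟩ : SmIdx m))
  · intro p hp
    simp only [Finset.mem_filter, Finset.mem_univ, true_and] at hp
    simp only [Finset.mem_range]
    have := p.2.2; omega
  · intro r hr
    simp
  · intro p hp
    simp only [Finset.mem_filter, Finset.mem_univ, true_and] at hp
    apply Subtype.ext
    apply Prod.ext
    · exact Fin.ext (by simpa using hp.symm)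
    · exact Fin.ext (by simp; omega)
  · intro r hr
    simp only [Finset.mem_range] at hr
    simp; omega
  · intro p hp
    simp only [Finset.mem_filter, Finset.mem_univ, true_and] at hp
    exact hfg p hp

/-- If `x ∈ ℝ^{S_m}` satisfies `Q x = 0` and `x_{(1,0)} + x_{(1,1)} = 1`, then for every `n`
with `1 ≤ n ≤ m` we have `∑_{r=0}^{n} x_{(n,r)} = 1`. -/
theorem stmt7 (m : ℕ) (hm : 1 ≤ m) (θ u v : ℝ) (hθ : 0 < θ) (hu : 0 ≤ u) (hv : 0 ≤ v)
    (x : SmIdx m → ℝ) (hx : (coalQ m θ u v).mulVec x = 0)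
    (hnorm : x (st10 m hm) + x (st11 m hm) = 1)
    (n : ℕ) (hn : 1 ≤ n) (hnm : n ≤ m) :
    ∑ p ∈ Finset.univ.filter (fun p : SmIdx m => (p.1.1 : ℕ) = n), x p = 1 := by
  have hrow : ∀ p : SmIdx m, ∑ q, coalQ m θ u v p q * x q = 0 := by
    intro p
    have := congrFun hx p
    simpa [Matrix.mulVec, dotProduct] using this
  revert hnm
  induction n, hn using Nat.le_induction with
  | base =>
    intro _
    have key := level_sum (m := m) 1 le_rfl hm x
        (fun r => if r = 0 then x (st10 m hm) else x (st11 m hm)) ?_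
    · rw [key, Finset.sum_range_succ, Finset.sum_range_succ, Finset.sum_range_zero]
      simpa using hnorm
    · intro p hp
      have hr : (p.1.2 : ℕ) ≤ 1 := by have := p.2.2; omega
      rcases Nat.le_one_iff_eq_zero_or_eq_one.mp hr with h | h
      · have hps : p = st10 m hm := by
          apply Subtype.ext
          apply Prod.ext
          · exact Fin.ext (by simpa [st10] using hp)
          · exact Fin.ext (by simpa [st10] using h)
        rw [hps]
        simp [st10, st11]
      · have hps : p = st11 m hm := by
          apply Subtype.ext
          apply Prod.ext
          · exact Fin.ext (by simpa [st11] using hp)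
          · exact Fin.ext (by simpa [st11] using h)
        rw [hps]
        simp [st10, st11]
  | succ n hn1 ih =>
    intro hsm
    have hIH := ih (by omega)
    set K : ℝ := ((n:ℝ)+1) * (((n:ℝ)+1) - 1) / θ with hK
    have hKne : K ≠ 0 := by
      rw [hK]
      apply div_ne_zero _ (ne_of_gt hθ)
      apply mul_ne_zero
      · positivity
      · have : (1:ℝ) ≤ (n:ℝ) := by exact_mod_cast hn1
        nlinarith
    -- sum of the rows at level n+1
    have h0 : ∑ p ∈ Finset.univ.filter (fun p : SmIdx m => (p.1.1 : ℕ) = n + 1),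
        (∑ q, coalQ m θ u v p q * x q) = 0 :=
      Finset.sum_eq_zero fun p _ => hrow p
    have h1 : ∑ p ∈ Finset.univ.filter (fun p : SmIdx m => (p.1.1 : ℕ) = n + 1),
        (∑ q, coalQ m θ u v p q * x q)
        = ∑ r ∈ Finset.range (n + 2),
            (∑ q : SmIdx m, QEnt θ u v (n+1) r (q.1.1 : ℕ) (q.1.2 : ℕ) * x q) := by
      exact level_sum (n+1) (by omega) hsm _ _ (fun p hp => by
        simp only [coalQ, hp])
    have h2 : ∑ r ∈ Finset.range (n + 2),
            (∑ q : SmIdx m, QEnt θ u v (n+1) r (q.1.1 : ℕ) (q.1.2 : ℕ) * x q)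
        = ∑ q : SmIdx m,
            (∑ r ∈ Finset.range (n + 2), QEnt θ u v (n+1) r (q.1.1 : ℕ) (q.1.2 : ℕ)) * x q := by
      rw [Finset.sum_comm]
      exact Finset.sum_congr rfl fun q _ => (Finset.sum_mul _ _ _).symm
    have h3 : ∀ q : SmIdx m,
        (∑ r ∈ Finset.range (n + 2), QEnt θ u v (n+1) r (q.1.1 : ℕ) (q.1.2 : ℕ)) * x q
        = (if (q.1.1 : ℕ) = n + 1 then -K * x q else 0)
          + (if (q.1.1 : ℕ) = n then K * x q else 0) := by
      intro q
      have hcs := colsum θ u v (n+1) (q.1.1 : ℕ) (q.1.2 : ℕ) (by omega) q.2.2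
      rw [show ((n:ℕ)+1) = n + 1 from rfl] at hcs
      rw [hcs]
      have hcast : ((n+1 : ℕ) : ℝ) = (n:ℝ) + 1 := by push_cast; ring
      split_ifs with ha hb hb <;> first
        | omega
        | (rw [hK]; push_cast; ring)
        | (exfalso; omega)
        | ring
    have h4 : ∑ q : SmIdx m,
        ((if (q.1.1 : ℕ) = n + 1 then -K * x q else 0)
          + (if (q.1.1 : ℕ) = n then K * x q else 0)) = 0 := by
      rw [← Finset.sum_congr rfl fun q _ => h3 q, ← h2, ← h1, h0]
    rw [Finset.sum_add_distrib, ← Finset.sum_filter, ← Finset.sum_filter] at h4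
    have hS1 : ∑ q ∈ Finset.univ.filter (fun q : SmIdx m => (q.1.1 : ℕ) = n + 1), -K * x q
        = -K * ∑ q ∈ Finset.univ.filter (fun q : SmIdx m => (q.1.1 : ℕ) = n + 1), x q := by
      rw [Finset.mul_sum]
    have hS2 : ∑ q ∈ Finset.univ.filter (fun q : SmIdx m => (q.1.1 : ℕ) = n), K * x q
        = K * ∑ q ∈ Finset.univ.filter (fun q : SmIdx m => (q.1.1 : ℕ) = n), x q := by
      rw [Finset.mul_sum]
    rw [hS1, hS2, hIH, mul_one] at h4
    have : K * (∑ q ∈ Finset.univ.filter (fun q : SmIdx m => (q.1.1 : ℕ) = n + 1), x q - 1)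
        = 0 := by linarith
    rcases mul_eq_zero.mp this with h | h
    · exact absurd h hKne
    · linarith
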